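/- arXiv:2402.16214 — 2 statements merged into one kernel-verified Lean document; each statement's English description precedes it below -/
import Mathlib

section
/- Let f be a homogeneous polynomial written as f = g_1 + ··· + g_r where the g_i share no order types pairwise. Suppose g ∈ (f)_{S_d} is homogeneous with deg(g) = deg(f), g shares order types only with g_1 among the g_i, and g(𝟏) ≠ 0. Then g_i(𝟏) = 0 for all i ≠ 1, and hence f(𝟏) = g_1(𝟏). -/
open MvPolynomial

def symOrbit {k : Type*} [CommSemiring k] {d : ℕ} (f : MvPolynomial (Fin d) k) :
    Set (MvPolynomial (Fin d) k) :=
  Set.range (fun σ : Equiv.Perm (Fin d) => rename σ f)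

noncomputable def psi {k : Type*} [CommSemiring k] {d : ℕ} (f : MvPolynomial (Fin d) k) :
    Ideal (MvPolynomial (Fin d) k) :=
  Ideal.span (symOrbit f)

def orderType {d : ℕ} (s : Fin d →₀ ℕ) : Multiset ℕ :=
  Multiset.map (s : Fin d → ℕ) Finset.univ.val

/-- Two polynomials share an order type if some monomial of one has the same order type
as some monomial of the other. -/
def sharesOrderType {k : Type*} [CommSemiring k] {d : ℕ}
    (f g : MvPolynomial (Fin d) k) : Prop :=
  ∃ m ∈ f.support, ∃ m' ∈ g.support, orderType m = orderType m'

lemma orderType_mapDomain {d : ℕ} (σ : Equiv.Perm (Fin d)) (m : Fin d →₀ ℕ) :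
    orderType (Finsupp.mapDomain σ m) = orderType m := by
  rw [← Finsupp.equivMapDomain_eq_mapDomain]
  unfold orderType
  have h1 : ((Finsupp.equivMapDomain σ m : Fin d →₀ ℕ) : Fin d → ℕ)
      = (m : Fin d → ℕ) ∘ σ.symm := by
    funext x; simp [Finsupp.equivMapDomain_apply]
  rw [h1, ← Multiset.map_map]
  congr 1
  calc Multiset.map (⇑σ.symm) Finset.univ.val
      = (Finset.univ.map σ.symm.toEmbedding).val := rfl
    _ = Finset.univ.val := by rw [Finset.map_univ_equiv]

lemma mem_support_rename_orderType {k : Type*} [CommSemiring k] {d : ℕ}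
    (σ : Equiv.Perm (Fin d)) (q : MvPolynomial (Fin d) k) {m : Fin d →₀ ℕ}
    (hm : m ∈ (rename (σ : Fin d → Fin d) q).support) :
    ∃ m' ∈ q.support, orderType m = orderType m' := by
  classical
  rw [support_rename_of_injective σ.injective] at hm
  obtain ⟨m', hm', rfl⟩ := Finset.mem_image.mp hm
  exact ⟨m', hm', orderType_mapDomain σ m'⟩

lemma homogeneousComponent_mul_of_isHomogeneous {k : Type*} [CommSemiring k] {τ : Type*}
    {n : ℕ} (h p : MvPolynomial τ k) (hp : p.IsHomogeneous n) :
    homogeneousComponent n (h * p) = C (coeff 0 h) * p := by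
  classical
  ext m
  rw [coeff_homogeneousComponent, coeff_C_mul]
  by_cases hm : m.degree = n
  · rw [if_pos hm, coeff_mul]
    rw [Finset.sum_eq_single ((0 : τ →₀ ℕ), m)]
    · intro b hb hbne
      rw [Finset.HasAntidiagonal.mem_antidiagonal] at hb
      by_cases hb2 : coeff b.2 p = 0
      · rw [hb2, mul_zero]
      · exfalso
        have hd2 : b.2.degree = n := by
          by_contra hcon
          exact hb2 (hp.coeff_eq_zero hcon)
        have hdeg : b.1.degree + b.2.degree = m.degree := by
          rw [← hb]
          simp [Finsupp.degree_eq_weight_one, map_add]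
        have hb1 : b.1 = 0 := by
          rw [hd2, hm] at hdeg
          exact (Finsupp.degree_eq_zero_iff _).mp (by omega)
        apply hbne
        have : b.2 = m := by rw [← hb, hb1, zero_add]
        exact Prod.ext hb1 this
    · intro hnot
      exfalso
      exact hnot (Finset.HasAntidiagonal.mem_antidiagonal.mpr (zero_add m))
  · rw [if_neg hm, hp.coeff_eq_zero hm, mul_zero]

theorem zero_components {k : Type*} [Field k] {d r : ℕ} {n : ℕ}
    (gs : Fin (r + 1) → MvPolynomial (Fin d) k)
    (f : MvPolynomial (Fin d) k) (hf : f = ∑ i, gs i)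
    (hfhom : f.IsHomogeneous n)
    (hdisj : ∀ i j, i ≠ j → ¬ sharesOrderType (gs i) (gs j))
    (g : MvPolynomial (Fin d) k) (hg : g ∈ psi f) (hghom : g.IsHomogeneous n)
    (honly : ∀ i, i ≠ 0 → ¬ sharesOrderType g (gs i))
    (hshare : sharesOrderType g (gs 0))
    (hg1 : eval (fun _ => (1 : k)) g ≠ 0) :
    (∀ i, i ≠ 0 → eval (fun _ => (1 : k)) (gs i) = 0) ∧
      eval (fun _ => (1 : k)) f = eval (fun _ => (1 : k)) (gs 0) := by
  classical
  set ev : MvPolynomial (Fin d) k →+* k := eval (fun _ => (1 : k)) with hev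
  -- span representation
  have hg' : g ∈ Submodule.span (MvPolynomial (Fin d) k) (symOrbit f) := hg
  rw [Submodule.mem_span_set] at hg'
  obtain ⟨c, hsup, hsum⟩ := hg'
  have hps : ∀ p ∈ c.support, p.IsHomogeneous n := by
    intro p hp
    obtain ⟨σ, rfl⟩ := hsup hp
    exact hfhom.rename_isHomogeneous
  have h2 : g = ∑ p ∈ c.support, C (coeff 0 (c p)) * p := by
    have h1 : homogeneousComponent n g = g := by
      rw [homogeneousComponent_of_mem ((mem_homogeneousSubmodule n g).mpr hghom), if_pos rfl]
    rw [← h1]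
    conv_lhs => rw [← hsum]
    rw [Finsupp.sum, map_sum]
    refine Finset.sum_congr rfl fun p hp => ?_
    rw [smul_eq_mul, homogeneousComponent_mul_of_isHomogeneous _ _ (hps p hp)]
  set A : Finset (Fin d →₀ ℕ) := Finset.univ.biUnion fun σ : Equiv.Perm (Fin d) =>
    Finset.univ.biUnion fun j : Fin (r+1) => (rename (σ : Fin d → Fin d) (gs j)).support with hA
  set T : Fin (r+1) → Finset (Multiset ℕ) := fun i => (gs i).support.image orderType with hT
  set phi : Fin (r+1) → MvPolynomial (Fin d) k → k :=
    fun i h => ∑ m ∈ A, if orderType m ∈ T i then coeff m h else 0 with hphi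
  have hmemT : ∀ i s, s ∈ T i ↔ ∃ m' ∈ (gs i).support, orderType m' = s := by
    intro i s; rw [hT]; simp [Finset.mem_image]
  have hevA : ∀ q : MvPolynomial (Fin d) k, q.support ⊆ A → ∑ m ∈ A, coeff m q = ev q := by
    intro q hq
    have h3 : ∑ m ∈ A, coeff m q = ∑ m ∈ q.support, coeff m q :=
      (Finset.sum_subset hq (fun m _ hm => notMem_support_iff.mp hm)).symm
    rw [h3, hev, eval_eq]
    simp
  have hsubA : ∀ (σ : Equiv.Perm (Fin d)) (j : Fin (r+1)),
      (rename (σ : Fin d → Fin d) (gs j)).support ⊆ A := by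
    intro σ j m hm
    exact Finset.mem_biUnion.mpr ⟨σ, Finset.mem_univ _,
      Finset.mem_biUnion.mpr ⟨j, Finset.mem_univ _, hm⟩⟩
  have hevren : ∀ (σ : Equiv.Perm (Fin d)) (q : MvPolynomial (Fin d) k),
      ev (rename (σ : Fin d → Fin d) q) = ev q := by
    intro σ q
    rw [hev]
    rw [eval_rename]
    rfl
  have hkey : ∀ (σ : Equiv.Perm (Fin d)) (i : Fin (r+1)),
      phi i (rename (σ : Fin d → Fin d) f) = ev (gs i) := by
    intro σ i
    have hren : rename (σ : Fin d → Fin d) f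
        = ∑ j, rename (σ : Fin d → Fin d) (gs j) := by
      rw [hf, map_sum]
    calc phi i (rename (σ : Fin d → Fin d) f)
        = ∑ m ∈ A, if orderType m ∈ T i
            then ∑ j, coeff m (rename (σ : Fin d → Fin d) (gs j)) else 0 := by
          rw [hphi]; simp only [hren, coeff_sum]
      _ = ∑ m ∈ A, ∑ j, (if orderType m ∈ T i
            then coeff m (rename (σ : Fin d → Fin d) (gs j)) else 0) := by
          refine Finset.sum_congr rfl fun m _ => ?_; split <;> simp
      _ = ∑ j, ∑ m ∈ A, (if orderType m ∈ T i
            then coeff m (rename (σ : Fin d → Fin d) (gs j)) else 0) := Finset.sum_comm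
      _ = ∑ m ∈ A, (if orderType m ∈ T i
            then coeff m (rename (σ : Fin d → Fin d) (gs i)) else 0) := by
          refine Fintype.sum_eq_single i ?_
          intro j hj
          apply Finset.sum_eq_zero; intro m _
          by_cases hc : coeff m (rename (σ : Fin d → Fin d) (gs j)) = 0
          · simp [hc]
          · rw [if_neg]
            intro hTi
            obtain ⟨m₁, hm₁, hot₁⟩ := (hmemT i _).mp hTi
            obtain ⟨m₂, hm₂, hot₂⟩ :=
              mem_support_rename_orderType σ (gs j) (mem_support_iff.mpr hc)
            exact hdisj i j (Ne.symm hj) ⟨m₁, hm₁, m₂, hm₂, by rw [hot₁, hot₂]⟩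
      _ = ∑ m ∈ A, coeff m (rename (σ : Fin d → Fin d) (gs i)) := by
          refine Finset.sum_congr rfl fun m _ => ?_
          by_cases hc : coeff m (rename (σ : Fin d → Fin d) (gs i)) = 0
          · simp [hc]
          · rw [if_pos]
            obtain ⟨m', hm', hot⟩ :=
              mem_support_rename_orderType σ (gs i) (mem_support_iff.mpr hc)
            exact (hmemT i _).mpr ⟨m', hm', hot.symm⟩
      _ = ev (rename (σ : Fin d → Fin d) (gs i)) := hevA _ (hsubA σ i)
      _ = ev (gs i) := hevren σ _
  have hphig0 : ∀ i, i ≠ 0 → phi i g = 0 := by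
    intro i hi
    rw [hphi]
    apply Finset.sum_eq_zero; intro m _
    by_cases hc : coeff m g = 0
    · simp [hc]
    · rw [if_neg]
      intro hTi
      obtain ⟨m₁, hm₁, hot₁⟩ := (hmemT i _).mp hTi
      exact honly i hi ⟨m, mem_support_iff.mpr hc, m₁, hm₁, hot₁.symm⟩
  have hphisum : ∀ i, phi i g = (∑ p ∈ c.support, coeff 0 (c p)) * ev (gs i) := by
    intro i
    calc phi i g
        = ∑ m ∈ A, if orderType m ∈ T i
            then ∑ p ∈ c.support, coeff 0 (c p) * coeff m p else 0 := by
          rw [hphi]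
          simp only [h2, coeff_sum, coeff_C_mul]
      _ = ∑ m ∈ A, ∑ p ∈ c.support, (if orderType m ∈ T i
            then coeff 0 (c p) * coeff m p else 0) := by
          refine Finset.sum_congr rfl fun m _ => ?_; split <;> simp
      _ = ∑ p ∈ c.support, ∑ m ∈ A, (if orderType m ∈ T i
            then coeff 0 (c p) * coeff m p else 0) := Finset.sum_comm
      _ = ∑ p ∈ c.support, coeff 0 (c p) * phi i p := by
          refine Finset.sum_congr rfl fun p _ => ?_
          rw [hphi, Finset.mul_sum]
          refine Finset.sum_congr rfl fun m _ => ?_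
          split <;> simp
      _ = ∑ p ∈ c.support, coeff 0 (c p) * ev (gs i) := by
          refine Finset.sum_congr rfl fun p hp => ?_
          obtain ⟨σ, rfl⟩ := hsup hp
          rw [hkey σ i]
      _ = (∑ p ∈ c.support, coeff 0 (c p)) * ev (gs i) := (Finset.sum_mul _ _ _).symm
  have hevg : ev g = (∑ p ∈ c.support, coeff 0 (c p)) * ev f := by
    calc ev g = ∑ p ∈ c.support, coeff 0 (c p) * ev p := by
          rw [h2]; simp only [map_sum, map_mul, eval_C, hev]
      _ = ∑ p ∈ c.support, coeff 0 (c p) * ev f := by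
          refine Finset.sum_congr rfl fun p hp => ?_
          obtain ⟨σ, rfl⟩ := hsup hp
          rw [hevren]
      _ = (∑ p ∈ c.support, coeff 0 (c p)) * ev f := (Finset.sum_mul _ _ _).symm
  have hCne : (∑ p ∈ c.support, coeff 0 (c p)) ≠ 0 := by
    intro h0
    exact hg1 (by rw [hevg, h0, zero_mul])
  have part1 : ∀ i, i ≠ 0 → ev (gs i) = 0 := by
    intro i hi
    have h4 := hphisum i
    rw [hphig0 i hi] at h4
    rcases mul_eq_zero.mp h4.symm with h | h
    · exact absurd h hCne
    · exact h
  refine ⟨part1, ?_⟩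
  have h5 : ev f = ∑ i, ev (gs i) := by
    rw [hf]; simp only [map_sum]
  rw [h5, Fintype.sum_eq_single 0 part1]
end

section
/- Suppose (f)_{S_d} is a monomial ideal. If f contains a term whose monomial has order type a, then every monomial of order type a lies in (f)_{S_d}, i.e., R_a ⊆ (f)_{S_d}. If moreover f is strongly homogeneous, then (f)_{S_d} equals the ideal (R_a). -/
open MvPolynomial

/-- An ideal of a multivariate polynomial ring is a monomial ideal if it is generated by
monomials. -/
def IsMonomialIdeal {k : Type*} [CommSemiring k] {d : ℕ}
    (I : Ideal (MvPolynomial (Fin d) k)) : Prop :=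
  ∃ T : Set (Fin d →₀ ℕ), I = Ideal.span ((fun s => (monomial s (1 : k))) '' T)

lemma orderType_eq_ofFn {d : ℕ} (s : Fin d →₀ ℕ) :
    orderType s = ↑(List.ofFn (s : Fin d → ℕ)) := by
  rw [orderType, ← Fin.univ_val_map]

lemma orderType_equivMapDomain {d : ℕ} (σ : Equiv.Perm (Fin d)) (m : Fin d →₀ ℕ) :
    orderType (Finsupp.equivMapDomain σ m) = orderType m := by
  unfold orderType
  have h1 : ((Finsupp.equivMapDomain σ m : Fin d →₀ ℕ) : Fin d → ℕ)
      = (m : Fin d → ℕ) ∘ σ.symm := by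
    funext i; simp [Finsupp.equivMapDomain_apply]
  rw [h1, ← Multiset.map_map]
  congr 1
  have := congrArg Finset.val (Finset.map_univ_equiv σ.symm)
  rwa [Finset.map_val] at this

lemma exists_perm_of_orderType_eq {d : ℕ} {s m : Fin d →₀ ℕ}
    (h : orderType s = orderType m) :
    ∃ σ : Equiv.Perm (Fin d), s = Finsupp.equivMapDomain σ m := by
  rw [orderType_eq_ofFn, orderType_eq_ofFn, Multiset.coe_eq_coe] at h
  have hperm : List.Perm (List.ofFn ((s : Fin d → ℕ) ∘ Tuple.sort s))
      (List.ofFn ((m : Fin d → ℕ) ∘ Tuple.sort m)) :=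
    ((Tuple.sort s).ofFn_comp_perm (s : Fin d → ℕ)).trans
      (h.trans ((Tuple.sort m).ofFn_comp_perm (m : Fin d → ℕ)).symm)
  have heq : (s : Fin d → ℕ) ∘ Tuple.sort s = (m : Fin d → ℕ) ∘ Tuple.sort m :=
    List.ofFn_injective <| List.Perm.eq_of_sortedLE
      (Tuple.monotone_sort _).sortedLE_ofFn (Tuple.monotone_sort _).sortedLE_ofFn hperm
  -- s = m ∘ (sort m) ∘ (sort s)⁻¹
  refine ⟨((Tuple.sort s).symm.trans (Tuple.sort m)).symm, ?_⟩
  ext i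
  have := congrFun heq ((Tuple.sort s).symm i)
  simp only [Function.comp_apply, Equiv.apply_symm_apply] at this
  simp [Finsupp.equivMapDomain_apply, this]

lemma rename_mem_psi {k : Type*} [CommSemiring k] {d : ℕ} {f x : MvPolynomial (Fin d) k}
    (σ : Equiv.Perm (Fin d)) (hx : x ∈ psi f) : rename (σ : Fin d → Fin d) x ∈ psi f := by
  have hmap : Ideal.map (rename (σ : Fin d → Fin d)).toRingHom (psi f) ≤ psi f := by
    rw [psi, Ideal.map_span, Ideal.span_le]
    rintro y ⟨z, ⟨τ, rfl⟩, rfl⟩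
    apply Ideal.subset_span
    exact ⟨σ * τ, by simp [rename_rename, Function.comp_def]⟩
  exact hmap (Ideal.mem_map_of_mem _ hx)

theorem contains_all_monomials_of_an_order_type {k : Type*} [Field k] {d : ℕ}
    (f : MvPolynomial (Fin d) k) (hmono : IsMonomialIdeal (psi f))
    (m : Fin d →₀ ℕ) (hm : m ∈ f.support) :
    (∀ s : Fin d →₀ ℕ, orderType s = orderType m →
        (monomial s (1 : k) : MvPolynomial (Fin d) k) ∈ psi f) ∧
      ((∀ m' ∈ f.support, orderType m' = orderType m) →
        psi f = Ideal.span {p : MvPolynomial (Fin d) k |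
          ∃ s : Fin d →₀ ℕ, orderType s = orderType m ∧ p = monomial s 1}) := by
  obtain ⟨T, hT⟩ := hmono
  have hf : f ∈ psi f := Ideal.subset_span ⟨1, by simp⟩
  have hmm : (monomial m (1 : k) : MvPolynomial (Fin d) k) ∈ psi f := by
    rw [hT] at hf ⊢
    rw [mem_ideal_span_monomial_image] at hf ⊢
    intro xi hxi
    have hxi' : m = xi := by simpa [support_monomial] using hxi
    exact hxi' ▸ hf m hm
  have part1 : ∀ s : Fin d →₀ ℕ, orderType s = orderType m →
      (monomial s (1 : k) : MvPolynomial (Fin d) k) ∈ psi f := by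
    intro s hs
    obtain ⟨σ, rfl⟩ := exists_perm_of_orderType_eq hs
    rw [Finsupp.equivMapDomain_eq_mapDomain, ← rename_monomial]
    exact rename_mem_psi σ hmm
  refine ⟨part1, fun hhom => ?_⟩
  apply le_antisymm
  · rw [psi, Ideal.span_le]
    rintro x ⟨σ, rfl⟩
    simp only
    rw [f.as_sum, map_sum]
    apply Ideal.sum_mem
    intro v hv
    rw [rename_monomial, ← mul_one (coeff v f), ← C_mul_monomial]
    apply Ideal.mul_mem_left
    apply Ideal.subset_span
    refine ⟨Finsupp.mapDomain (σ : Fin d → Fin d) v, ?_, rfl⟩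
    rw [← Finsupp.equivMapDomain_eq_mapDomain, orderType_equivMapDomain]
    exact hhom v hv
  · rw [Ideal.span_le]
    rintro p ⟨s, hs, rfl⟩
    exact part1 s hs
end
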